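/- Let A be a transitive unital ℤ₊-ring of finite rank with basis B = (b_j) containing 1, and suppose b, b* ∈ B are such that the decomposition of b·b* in the basis B contains 1 = b₀ with positive coefficient. Then there exists n ≥ 0 such that the B-decomposition of b^n contains b* with positive coefficient. -/

import Mathlib

open Finset

namespace ZPlusAux

variable {R : Type*} [Ring R] {ι : Type*} [Fintype ι]

lemma expand_right (b : Module.Basis ι ℤ R) (z y : R) (k : ι) :
    b.repr (z * y) k = ∑ x, b.repr y x * b.repr (z * b x) k := by
  conv_lhs => rw [← Module.Basis.sum_repr b y, Finset.mul_sum]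
  rw [map_sum]
  rw [Finsupp.finset_sum_apply]
  refine Finset.sum_congr rfl fun x _ => ?_
  rw [mul_smul_comm, map_smul, Finsupp.smul_apply, smul_eq_mul]

lemma expand_left (b : Module.Basis ι ℤ R) (z y : R) (k : ι) :
    b.repr (y * z) k = ∑ x, b.repr y x * b.repr (b x * z) k := by
  conv_lhs => rw [← Module.Basis.sum_repr b y, Finset.sum_mul]
  rw [map_sum]
  rw [Finsupp.finset_sum_apply]
  refine Finset.sum_congr rfl fun x _ => ?_
  rw [smul_mul_assoc, map_smul, Finsupp.smul_apply, smul_eq_mul]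


theorem core {ι : Type*} [Fintype ι] [DecidableEq ι]
    (E : ℕ → ι → ι → ℤ) (Rz : ι → ι → ℤ) (i₀ istar : ι)
    (hE0 : ∀ j k, E 0 j k = if j = k then 1 else 0)
    (hCK : ∀ s t j k, E (s + t) j k = ∑ x, E t j x * E s x k)
    (hnn1 : ∀ j k, 0 ≤ E 1 j k)
    (hrow1 : ∀ x, ∃ k, 0 < E 1 x k)
    (hRz1 : ∀ j k, 1 ≤ Rz j k)
    (hINT : ∀ m j z, (∑ x, E m j x * Rz x z) = ∑ x, Rz j x * E m x z)
    (hedge : 0 < E 1 istar i₀)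
    (hnotS : ∀ m, E m i₀ istar ≤ 0) : False := by
  classical
  -- peel-last-step Chapman-Kolmogorov
  have hCK1 : ∀ t j k, E (t + 1) j k = ∑ x, E t j x * E 1 x k := by
    intro t j k
    have := hCK 1 t j k
    rwa [Nat.add_comm] at this
  -- nonnegativity for all powers
  have hnn : ∀ m j k, 0 ≤ E m j k := by
    intro m
    induction m with
    | zero => intro j k; rw [hE0]; split <;> norm_num
    | succ m ih =>
      intro j k
      rw [hCK1]
      exact Finset.sum_nonneg fun x _ => mul_nonneg (ih j x) (hnn1 x k)
  -- the reachable set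
  set p : ι → Prop := fun k => ∃ m, 0 < E m i₀ k with hp
  have hp₀ : p i₀ := ⟨0, by rw [hE0]; simp⟩
  have histar : ¬ p istar := by
    rintro ⟨m, hm⟩
    exact absurd hm (not_lt.mpr (hnotS m))
  have hzero : ∀ (c : ℕ) (x : ι), ¬ p x → E c i₀ x = 0 := by
    intro c x hx
    refine le_antisymm ?_ (hnn c i₀ x)
    by_contra hcon
    exact hx ⟨c, lt_of_not_ge hcon⟩
  -- anything reachable cannot reach istar
  have ZIS : ∀ (m : ℕ) (y : ι), p y → E m y istar = 0 := by
    rintro m y ⟨t, ht⟩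
    refine le_antisymm ?_ (hnn m y istar)
    by_contra hcon
    have hpos : 0 < E m y istar := lt_of_not_ge hcon
    have : 0 < E (m + t) i₀ istar := by
      rw [hCK m t i₀ istar]
      refine Finset.sum_pos' (fun x _ => mul_nonneg (hnn t i₀ x) (hnn m x istar)) ?_
      exact ⟨y, Finset.mem_univ y, mul_pos ht hpos⟩
    exact absurd this (not_lt.mpr (hnotS (m + t)))
  -- the bound ρ
  set ρ : ℤ := ∑ j, ∑ k, Rz j k with hρ
  have hRznn : ∀ j k, (0:ℤ) ≤ Rz j k := fun j k => le_trans zero_le_one (hRz1 j k)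
  have hρRz : ∀ j k, Rz j k ≤ ρ := by
    intro j k
    calc Rz j k ≤ ∑ k', Rz j k' :=
          Finset.single_le_sum (fun k' _ => hRznn j k') (Finset.mem_univ k)
      _ ≤ ρ := Finset.single_le_sum
          (fun j' _ => Finset.sum_nonneg fun k' _ => hRznn j' k') (Finset.mem_univ j)
  have hρ1 : (1:ℤ) ≤ ρ := le_trans (hRz1 i₀ i₀) (hρRz i₀ i₀)
  have hρ0 : (0:ℤ) ≤ ρ := le_trans zero_le_one hρ1
  -- row/column comparison
  have I1a : ∀ m j z, (∑ x, E m j x) ≤ ρ * ∑ x, E m x z := by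
    intro m j z
    calc (∑ x, E m j x) ≤ ∑ x, E m j x * Rz x z :=
          Finset.sum_le_sum fun x _ => le_mul_of_one_le_right (hnn m j x) (hRz1 x z)
      _ = ∑ x, Rz j x * E m x z := hINT m j z
      _ ≤ ∑ x, ρ * E m x z :=
          Finset.sum_le_sum fun x _ => mul_le_mul_of_nonneg_right (hρRz j x) (hnn m x z)
      _ = ρ * ∑ x, E m x z := by rw [Finset.mul_sum]
  have I1b : ∀ m j z, (∑ x, E m x z) ≤ ρ * ∑ x, E m j x := by
    intro m j z
    calc (∑ x, E m x z) ≤ ∑ x, Rz j x * E m x z :=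
          Finset.sum_le_sum fun x _ => le_mul_of_one_le_left (hnn m x z) (hRz1 j x)
      _ = ∑ x, E m j x * Rz x z := (hINT m j z).symm
      _ ≤ ∑ x, E m j x * ρ :=
          Finset.sum_le_sum fun x _ => mul_le_mul_of_nonneg_left (hρRz x z) (hnn m j x)
      _ = ρ * ∑ x, E m j x := by rw [← Finset.sum_mul, mul_comm]
  -- all row sums are at least 1
  have hrow : ∀ m j, (1:ℤ) ≤ ∑ k, E m j k := by
    intro m
    induction m with
    | zero =>
      intro j
      have : (∑ k, E 0 j k) = 1 := by
        rw [Finset.sum_congr rfl fun k _ => hE0 j k]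
        simp
      omega
    | succ m ih =>
      intro j
      obtain ⟨x₀, hx₀⟩ : ∃ x₀, 1 ≤ E m j x₀ := by
        by_contra hcon
        push_neg at hcon
        have : (∑ x, E m j x) ≤ 0 := by
          calc (∑ x, E m j x) ≤ ∑ _x, (0:ℤ) :=
                Finset.sum_le_sum fun x _ => by have := hcon x; have := hnn m j x; omega
            _ = 0 := by simp
        have := ih j; omega
      obtain ⟨k₀, hk₀⟩ := hrow1 x₀
      have h1 : (1:ℤ) ≤ ∑ k, E 1 x₀ k := by
        calc (1:ℤ) ≤ E 1 x₀ k₀ := hk₀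
          _ ≤ ∑ k, E 1 x₀ k := Finset.single_le_sum (fun k _ => hnn1 x₀ k) (Finset.mem_univ k₀)
      have hswap : (∑ k, E (m+1) j k) = ∑ x, E m j x * ∑ k, E 1 x k := by
        rw [Finset.sum_congr rfl fun k (_ : k ∈ univ) => hCK1 m j k, Finset.sum_comm]
        exact Finset.sum_congr rfl fun x _ => by rw [Finset.mul_sum]
      rw [hswap]
      calc (1:ℤ) = 1 * 1 := by ring
        _ ≤ E m j x₀ * ∑ k, E 1 x₀ k := by
            exact mul_le_mul hx₀ h1 zero_le_one (le_trans zero_le_one hx₀)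
        _ ≤ ∑ x, E m j x * ∑ k, E 1 x k := by
            refine Finset.single_le_sum (f := fun x => E m j x * ∑ k, E 1 x k)
              (fun x _ => ?_) (Finset.mem_univ x₀)
            exact mul_nonneg (hnn m j x) (Finset.sum_nonneg fun k _ => hnn1 x k)

  -- row sum from i₀ (coefficients of the powers)
  set gg : ℕ → ℤ := fun m => ∑ k, E m i₀ k with hgg
  have hg1 : ∀ m, (1:ℤ) ≤ gg m := fun m => hrow m i₀
  have hg0 : ∀ m, (0:ℤ) ≤ gg m := fun m => le_trans zero_le_one (hg1 m)
  -- submultiplicativity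
  have SUB : ∀ s t, gg (s + t) ≤ gg t * (ρ * (ρ * gg s)) := by
    intro s t
    have hstep : ∀ x, (∑ k, E s x k) ≤ ρ * (ρ * gg s) := by
      intro x
      calc (∑ k, E s x k) ≤ ρ * ∑ k, E s k i₀ := I1a s x i₀
        _ ≤ ρ * (ρ * ∑ k, E s i₀ k) := by
            have := I1b s i₀ i₀
            exact mul_le_mul_of_nonneg_left this hρ0
        _ = ρ * (ρ * gg s) := rfl
    calc gg (s + t) = ∑ k, ∑ x, E t i₀ x * E s x k := by
          exact Finset.sum_congr rfl fun k _ => hCK s t i₀ k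
      _ = ∑ x, E t i₀ x * ∑ k, E s x k := by
          rw [Finset.sum_comm]
          exact Finset.sum_congr rfl fun x _ => by rw [Finset.mul_sum]
      _ ≤ ∑ x, E t i₀ x * (ρ * (ρ * gg s)) := by
          refine Finset.sum_le_sum fun x _ => ?_
          exact mul_le_mul_of_nonneg_left (hstep x) (hnn t i₀ x)
      _ = gg t * (ρ * (ρ * gg s)) := by rw [← Finset.sum_mul]
  -- the reachable sets as finsets
  set SF : Finset ι := Finset.univ.filter p with hSF
  set SFc : Finset ι := Finset.univ.filter (fun k => ¬ p k) with hSFc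
  have histar_mem : istar ∈ SFc := by
    rw [hSFc, Finset.mem_filter]
    exact ⟨Finset.mem_univ istar, histar⟩
  have hsplit : ∀ f : ι → ℤ, (∑ x, f x) = (∑ x ∈ SF, f x) + ∑ x ∈ SFc, f x := by
    intro f
    rw [hSF, hSFc]
    exact (Finset.sum_filter_add_sum_filter_not Finset.univ p f).symm
  set colSc : ℕ → ι → ℤ := fun m k => ∑ y ∈ SFc, E m y k with hcolSc
  have colSc_nn : ∀ m k, 0 ≤ colSc m k :=
    fun m k => Finset.sum_nonneg fun y _ => hnn m y k
  have hfullcol : ∀ m, (∑ y, E m y istar) = colSc m istar := by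
    intro m
    rw [hsplit (fun y => E m y istar)]
    have h1 : (∑ y ∈ SF, E m y istar) = 0 := by
      refine Finset.sum_eq_zero fun y hy => ?_
      rw [hSF, Finset.mem_filter] at hy
      exact ZIS m y hy.2
    rw [h1, zero_add]
  have colevt : ∀ m, gg m ≤ ρ * colSc m istar := by
    intro m
    have := I1a m i₀ istar
    rwa [hfullcol m] at this
  -- the crossing sums
  set W : ℕ → ι → ℤ := fun m k => ∑ q ∈ Finset.HasAntidiagonal.antidiagonal m, gg q.1 * E q.2 i₀ k with hW
  have restrict : ∀ (c : ℕ) (k : ι), (∑ x ∈ SF, E c i₀ x * E 1 x k) = E (c+1) i₀ k := by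
    intro c k
    rw [hCK1 c i₀ k, hsplit (fun x => E c i₀ x * E 1 x k)]
    have h2 : (∑ x ∈ SFc, E c i₀ x * E 1 x k) = 0 := by
      refine Finset.sum_eq_zero fun x hx => ?_
      rw [hSFc, Finset.mem_filter] at hx
      rw [hzero c x hx.2, zero_mul]
    rw [h2, add_zero]
  have E0diag : E 0 i₀ i₀ = 1 := by rw [hE0]; simp
  -- the key induction
  have BL2 : ∀ m, ∀ k, p k → W m k ≤ ρ * colSc (m+1) k := by
    intro m
    induction m with
    | zero =>
      intro k _
      have hWz : W 0 k = E 0 i₀ k := by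
        rw [hW]
        simp only [Finset.Nat.antidiagonal_zero, Finset.sum_singleton]
        have : gg 0 = 1 := by
          rw [hgg]
          have : (∑ k', E 0 i₀ k') = 1 := by
            rw [Finset.sum_congr rfl fun k' _ => hE0 i₀ k']
            simp
          exact this
        rw [this, one_mul]
      rw [hWz]
      by_cases hk : i₀ = k
      · subst hk
        rw [E0diag]
        have hcol : (1:ℤ) ≤ colSc 1 i₀ := by
          calc (1:ℤ) ≤ E 1 istar i₀ := hedge
            _ ≤ colSc 1 i₀ :=
              Finset.single_le_sum (fun y _ => hnn 1 y i₀) histar_mem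
        calc (1:ℤ) = 1 * 1 := by ring
          _ ≤ ρ * colSc 1 i₀ := mul_le_mul hρ1 hcol zero_le_one hρ0
      · rw [hE0]
        simp only [hk, if_false]
        exact mul_nonneg hρ0 (colSc_nn 1 k)
    | succ m ih =>
      intro k _
      -- expand the target
      have ha : colSc (m+2) k = ∑ x, colSc (m+1) x * E 1 x k := by
        rw [hcolSc]
        simp only
        rw [Finset.sum_congr rfl fun y (_ : y ∈ SFc) => hCK1 (m+1) y k, Finset.sum_comm]
        exact Finset.sum_congr rfl fun x _ => by rw [Finset.sum_mul]
      have hb : ρ * colSc (m+2) k =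
          (∑ x ∈ SF, (ρ * colSc (m+1) x) * E 1 x k)
            + ∑ x ∈ SFc, (ρ * colSc (m+1) x) * E 1 x k := by
        rw [ha, hsplit (fun x => colSc (m+1) x * E 1 x k), mul_add, Finset.mul_sum,
          Finset.mul_sum]
        congr 1 <;> exact Finset.sum_congr rfl fun x _ => by ring
      have hc : (ρ * colSc (m+1) istar) * E 1 istar k ≤
          ∑ x ∈ SFc, (ρ * colSc (m+1) x) * E 1 x k := by
        refine Finset.single_le_sum (f := fun x => (ρ * colSc (m+1) x) * E 1 x k)
          (fun x _ => ?_) histar_mem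
        exact mul_nonneg (mul_nonneg hρ0 (colSc_nn (m+1) x)) (hnn1 x k)
      have hd : (∑ x ∈ SF, W m x * E 1 x k) ≤ ∑ x ∈ SF, (ρ * colSc (m+1) x) * E 1 x k := by
        refine Finset.sum_le_sum fun x hx => ?_
        rw [hSF, Finset.mem_filter] at hx
        exact mul_le_mul_of_nonneg_right (ih x hx.2) (hnn1 x k)
      have he : (∑ x ∈ SF, W m x * E 1 x k)
          = ∑ q ∈ Finset.HasAntidiagonal.antidiagonal m, gg q.1 * E (q.2+1) i₀ k := by
        rw [hW]
        simp only
        calc (∑ x ∈ SF, (∑ q ∈ Finset.HasAntidiagonal.antidiagonal m, gg q.1 * E q.2 i₀ x) * E 1 x k)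
            = ∑ x ∈ SF, ∑ q ∈ Finset.HasAntidiagonal.antidiagonal m, gg q.1 * (E q.2 i₀ x * E 1 x k) := by
              refine Finset.sum_congr rfl fun x _ => ?_
              rw [Finset.sum_mul]
              exact Finset.sum_congr rfl fun q _ => by ring
          _ = ∑ q ∈ Finset.HasAntidiagonal.antidiagonal m, ∑ x ∈ SF, gg q.1 * (E q.2 i₀ x * E 1 x k) :=
              Finset.sum_comm
          _ = ∑ q ∈ Finset.HasAntidiagonal.antidiagonal m, gg q.1 * E (q.2+1) i₀ k := by
              refine Finset.sum_congr rfl fun q _ => ?_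
              rw [← Finset.mul_sum, restrict q.2 k]
      have hf : gg (m+1) * E 0 i₀ k ≤ gg (m+1) * E 1 istar k := by
        by_cases hk : i₀ = k
        · subst hk
          rw [E0diag]
          have h1' : (1:ℤ) ≤ E 1 istar i₀ := hedge
          exact mul_le_mul_of_nonneg_left h1' (hg0 (m+1))
        · rw [hE0]
          simp only [hk, if_false, mul_zero]
          exact mul_nonneg (hg0 (m+1)) (hnn1 istar k)
      have hgsucc : W (m+1) k
          = gg (m+1) * E 0 i₀ k + ∑ q ∈ Finset.HasAntidiagonal.antidiagonal m, gg q.1 * E (q.2+1) i₀ k := by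
        rw [hW]
        simp only
        exact Finset.Nat.sum_antidiagonal_succ' (f := fun q => gg q.1 * E q.2 i₀ k)
      have hh : gg (m+1) * E 1 istar k ≤ (ρ * colSc (m+1) istar) * E 1 istar k :=
        mul_le_mul_of_nonneg_right (colevt (m+1)) (hnn1 istar k)
      have hi' : (ρ * colSc (m+1) istar) * E 1 istar k ≤
          ∑ x ∈ SFc, (ρ * colSc (m+1) x) * E 1 x k := hc
      linarith [hd, he, hf, hgsucc, hh, hi', hb]
  -- final contradiction
  have key1 : ∀ m, (∑ q ∈ Finset.HasAntidiagonal.antidiagonal m, gg q.1 * gg q.2)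
      ≤ ρ * ∑ k ∈ SF, colSc (m+1) k := by
    intro m
    have hWsum : (∑ k ∈ SF, W m k) = ∑ q ∈ Finset.HasAntidiagonal.antidiagonal m, gg q.1 * gg q.2 := by
      rw [hW]
      simp only
      rw [Finset.sum_comm]
      refine Finset.sum_congr rfl fun q _ => ?_
      rw [← Finset.mul_sum]
      congr 1
      -- ∑ k ∈ SF, E q.2 i₀ k = gg q.2
      have := hsplit (fun k => E q.2 i₀ k)
      have hz : (∑ k ∈ SFc, E q.2 i₀ k) = 0 := by
        refine Finset.sum_eq_zero fun x hx => ?_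
        rw [hSFc, Finset.mem_filter] at hx
        exact hzero q.2 x hx.2
      rw [hgg]
      simp only
      omega
    calc (∑ q ∈ Finset.HasAntidiagonal.antidiagonal m, gg q.1 * gg q.2) = ∑ k ∈ SF, W m k := hWsum.symm
      _ ≤ ∑ k ∈ SF, ρ * colSc (m+1) k := by
          refine Finset.sum_le_sum fun k hk => ?_
          rw [hSF, Finset.mem_filter] at hk
          exact BL2 m k hk.2
      _ = ρ * ∑ k ∈ SF, colSc (m+1) k := by rw [Finset.mul_sum]
  set n : ℤ := (Fintype.card ι : ℤ) with hn
  have hn1 : (1:ℤ) ≤ n := by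
    have h' : 1 ≤ Fintype.card ι := Fintype.card_pos_iff.mpr ⟨i₀⟩
    rw [hn]
    exact_mod_cast h'
  have hn0 : (0:ℤ) ≤ n := le_trans zero_le_one hn1
  have key2 : ∀ M, (∑ k ∈ SF, colSc M k) ≤ n * (ρ * (ρ * gg M)) := by
    intro M
    have hsub : (∑ k ∈ SF, colSc M k) ≤ ∑ y, ∑ k, E M y k := by
      calc (∑ k ∈ SF, colSc M k) ≤ ∑ k, colSc M k := by
            refine Finset.sum_le_sum_of_subset_of_nonneg (Finset.subset_univ SF)
              fun k _ _ => colSc_nn M k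
        _ ≤ ∑ k, ∑ y, E M y k := by
            refine Finset.sum_le_sum fun k _ => ?_
            rw [hcolSc]
            simp only
            refine Finset.sum_le_sum_of_subset_of_nonneg (Finset.subset_univ SFc)
              fun y _ _ => hnn M y k
        _ = ∑ y, ∑ k, E M y k := Finset.sum_comm
    have hrowb : ∀ y, (∑ k, E M y k) ≤ ρ * (ρ * gg M) := by
      intro y
      calc (∑ k, E M y k) ≤ ρ * ∑ x, E M x i₀ := I1a M y i₀
        _ ≤ ρ * (ρ * ∑ x, E M i₀ x) := mul_le_mul_of_nonneg_left (I1b M i₀ i₀) hρ0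
        _ = ρ * (ρ * gg M) := rfl
    calc (∑ k ∈ SF, colSc M k) ≤ ∑ y, ∑ k, E M y k := hsub
      _ ≤ ∑ _y : ι, ρ * (ρ * gg M) := Finset.sum_le_sum fun y _ => hrowb y
      _ = n * (ρ * (ρ * gg M)) := by
          rw [Finset.sum_const, Finset.card_univ, nsmul_eq_mul, hn]
  have key3 : ∀ m : ℕ, ((m:ℤ)+1) * gg m
      ≤ ρ * ρ * ∑ q ∈ Finset.HasAntidiagonal.antidiagonal m, gg q.1 * gg q.2 := by
    intro m
    have hper : ∀ q ∈ Finset.HasAntidiagonal.antidiagonal m, gg m ≤ ρ * ρ * (gg q.1 * gg q.2) := by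
      intro q hq
      have hq' : q.1 + q.2 = m := Finset.HasAntidiagonal.mem_antidiagonal.mp hq
      have := SUB q.1 q.2
      rw [hq'] at this
      calc gg m ≤ gg q.2 * (ρ * (ρ * gg q.1)) := this
        _ = ρ * ρ * (gg q.1 * gg q.2) := by ring
    calc ((m:ℤ)+1) * gg m = ∑ _q ∈ Finset.HasAntidiagonal.antidiagonal m, gg m := by
          rw [Finset.sum_const, Finset.Nat.card_antidiagonal, nsmul_eq_mul]
          push_cast
          ring
      _ ≤ ∑ q ∈ Finset.HasAntidiagonal.antidiagonal m, ρ * ρ * (gg q.1 * gg q.2) :=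
          Finset.sum_le_sum hper
      _ = ρ * ρ * ∑ q ∈ Finset.HasAntidiagonal.antidiagonal m, gg q.1 * gg q.2 :=
          (Finset.mul_sum _ _ _).symm
  -- choose m large
  set K : ℤ := n * ρ^7 * gg 1 with hK
  have hK0 : 0 ≤ K := by
    rw [hK]
    exact mul_nonneg (mul_nonneg hn0 (pow_nonneg hρ0 7)) (hg0 1)
  set m : ℕ := K.toNat with hm
  have hmK : (m:ℤ) = K := Int.toNat_of_nonneg hK0
  have c1 : ((m:ℤ)+1) * gg m ≤ ρ * ρ * (ρ * ∑ k ∈ SF, colSc (m+1) k) := by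
    calc ((m:ℤ)+1) * gg m ≤ ρ * ρ * ∑ q ∈ Finset.HasAntidiagonal.antidiagonal m, gg q.1 * gg q.2 := key3 m
      _ ≤ ρ * ρ * (ρ * ∑ k ∈ SF, colSc (m+1) k) := by
          exact mul_le_mul_of_nonneg_left (key1 m) (mul_nonneg hρ0 hρ0)
  have c2 : ρ * ρ * (ρ * ∑ k ∈ SF, colSc (m+1) k)
      ≤ ρ * ρ * (ρ * (n * (ρ * (ρ * gg (m+1))))) := by
    exact mul_le_mul_of_nonneg_left (mul_le_mul_of_nonneg_left (key2 (m+1)) hρ0)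
      (mul_nonneg hρ0 hρ0)
  have c3 : gg (m+1) ≤ gg 1 * (ρ * (ρ * gg m)) := SUB m 1
  have c4 : ρ * ρ * (ρ * (n * (ρ * (ρ * gg (m+1)))))
      ≤ ρ * ρ * (ρ * (n * (ρ * (ρ * (gg 1 * (ρ * (ρ * gg m))))))) := by
    have h5 : (0:ℤ) ≤ ρ * ρ := mul_nonneg hρ0 hρ0
    refine mul_le_mul_of_nonneg_left ?_ h5
    refine mul_le_mul_of_nonneg_left ?_ hρ0
    refine mul_le_mul_of_nonneg_left ?_ hn0
    refine mul_le_mul_of_nonneg_left ?_ hρ0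
    exact mul_le_mul_of_nonneg_left c3 hρ0
  have c5 : ρ * ρ * (ρ * (n * (ρ * (ρ * (gg 1 * (ρ * (ρ * gg m))))))) = K * gg m := by
    rw [hK]; ring
  have cfin : ((m:ℤ)+1) * gg m ≤ K * gg m := by
    calc ((m:ℤ)+1) * gg m ≤ _ := c1
      _ ≤ _ := c2
      _ ≤ _ := c4
      _ = K * gg m := c5
  rw [hmK] at cfin
  have hexp : (K + 1) * gg m - K * gg m = gg m := by ring
  have : gg m ≤ 0 := by linarith
  linarith [hg1 m]

end ZPlusAux

/-- Let `R` be a unital ring, free of finite rank as a `ℤ`-module with basis `b`,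
with nonnegative structure constants (a `ℤ₊`-ring), containing `1 = b i₀` in the
basis, and transitive. If the `B`-decomposition of `b i * b istar` contains `1` with
positive coefficient, then some power `(b i)^n` contains `b istar` with positive
coefficient. -/
theorem zplus_ring_power_contains_dual {R : Type*} [Ring R] {ι : Type*} [Fintype ι]
    (b : Module.Basis ι ℤ R) (i₀ : ι) (hone : b i₀ = 1)
    (hnonneg : ∀ i j k : ι, 0 ≤ b.repr (b i * b j) k)
    (htrans : ∀ i j : ι,
      (∃ k : ι, 0 < b.repr (b i * b k) j) ∧ (∃ l : ι, 0 < b.repr (b l * b i) j))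
    (i istar : ι) (h : 0 < b.repr (b i * b istar) i₀) :
    ∃ n : ℕ, 0 < b.repr ((b i) ^ n) istar := by
  classical
  by_contra hc
  push_neg at hc
  set E : ℕ → ι → ι → ℤ := fun m j k => b.repr ((b i) ^ m * b j) k with hE
  set Rz : ι → ι → ℤ := fun j k => ∑ l, b.repr (b j * b l) k with hRzdef
  have hE0 : ∀ j k, E 0 j k = if j = k then 1 else 0 := by
    intro j k
    rw [hE]
    simp only [pow_zero, one_mul, Module.Basis.repr_self]
    exact Finsupp.single_apply
  have hCK : ∀ s t j k, E (s + t) j k = ∑ x, E t j x * E s x k := by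
    intro s t j k
    rw [hE]
    simp only [pow_add, mul_assoc]
    exact ZPlusAux.expand_right b ((b i) ^ s) ((b i) ^ t * b j) k
  have hnn1 : ∀ j k, 0 ≤ E 1 j k := by
    intro j k
    rw [hE]
    simpa [pow_one] using hnonneg i j k
  have hrow1 : ∀ x₀, ∃ k, 0 < E 1 x₀ k := by
    intro x₀
    by_contra hcon
    push_neg at hcon
    have hmulzero : b i * b x₀ = 0 := by
      have hrepr : b.repr (b i * b x₀) = 0 := by
        ext k
        have h1 := hcon k
        rw [hE] at h1
        simp only [pow_one] at h1
        have h2 := hnonneg i x₀ k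
        simp only [Finsupp.coe_zero, Pi.zero_apply]
        omega
      exact (LinearEquiv.map_eq_zero_iff b.repr).mp hrepr
    obtain ⟨k₁, hk₁⟩ := (htrans x₀ i₀).1
    have hval : 0 < b.repr (b i * (b x₀ * b k₁)) i := by
      rw [ZPlusAux.expand_right b (b i) (b x₀ * b k₁) i]
      have hdiag : b.repr (b i * b i₀) i = 1 := by
        rw [hone, mul_one, Module.Basis.repr_self, Finsupp.single_apply]
        simp
      have hterm : 0 < b.repr (b x₀ * b k₁) i₀ * b.repr (b i * b i₀) i := by
        rw [hdiag, mul_one]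
        exact hk₁
      exact Finset.sum_pos'
        (fun x _ => mul_nonneg (hnonneg x₀ k₁ x) (hnonneg i x i))
        ⟨i₀, Finset.mem_univ i₀, hterm⟩
    rw [← mul_assoc, hmulzero, zero_mul] at hval
    simp at hval
  have hRz1 : ∀ j k, 1 ≤ Rz j k := by
    intro j k
    obtain ⟨l, hl⟩ := (htrans j k).1
    have hpos : 0 < Rz j k := by
      rw [hRzdef]
      exact Finset.sum_pos' (fun l' _ => hnonneg j l' k) ⟨l, Finset.mem_univ l, hl⟩
    omega
  have hINT : ∀ m j z, (∑ x, E m j x * Rz x z) = ∑ x, Rz j x * E m x z := by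
    intro m j z
    have lhs : (∑ x, E m j x * Rz x z) = ∑ l, b.repr (((b i) ^ m * b j) * b l) z := by
      calc (∑ x, E m j x * Rz x z)
          = ∑ x, ∑ l, E m j x * b.repr (b x * b l) z := by
            refine Finset.sum_congr rfl fun x _ => ?_
            rw [hRzdef]
            exact Finset.mul_sum _ _ _
        _ = ∑ l, ∑ x, E m j x * b.repr (b x * b l) z := Finset.sum_comm
        _ = ∑ l, b.repr (((b i) ^ m * b j) * b l) z := by
            refine Finset.sum_congr rfl fun l _ => ?_
            rw [hE]
            exact (ZPlusAux.expand_left b (b l) ((b i) ^ m * b j) z).symm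
    have rhs : (∑ x, Rz j x * E m x z) = ∑ l, b.repr ((b i) ^ m * (b j * b l)) z := by
      calc (∑ x, Rz j x * E m x z)
          = ∑ x, ∑ l, b.repr (b j * b l) x * E m x z := by
            refine Finset.sum_congr rfl fun x _ => ?_
            rw [hRzdef]
            exact Finset.sum_mul _ _ _
        _ = ∑ l, ∑ x, b.repr (b j * b l) x * E m x z := Finset.sum_comm
        _ = ∑ l, b.repr ((b i) ^ m * (b j * b l)) z := by
            refine Finset.sum_congr rfl fun l _ => ?_
            rw [hE]
            exact (ZPlusAux.expand_right b ((b i) ^ m) (b j * b l) z).symm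
    rw [lhs, rhs]
    exact Finset.sum_congr rfl fun l _ => by rw [mul_assoc]
  have hedge : 0 < E 1 istar i₀ := by
    rw [hE]
    simpa [pow_one] using h
  have hnotS : ∀ m, E m i₀ istar ≤ 0 := by
    intro m
    rw [hE]
    simp only [hone, mul_one]
    exact hc m
  exact ZPlusAux.core E Rz i₀ istar hE0 hCK hnn1 hrow1 hRz1 hINT hedge hnotS
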